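/- arXiv:1301.1819 — 3 statements merged into one kernel-verified Lean document; each statement's English description precedes it below -/
import Mathlib

section
/- Consider the IFS on ℝ given by φ₁(x) = x/2, φ₂(x) = x/4 + 1/4, φ₃(x) = x/4 + 3/4. Its attractor A is not a finite union of closed intervals; in fact A is the closure of a countable union of disjoint nondegenerate closed intervals accumulating at the point 1. -/
open Set Filter EMetric

noncomputable def aa (n : ℕ) : ℝ := 1 - (4:ℝ)⁻¹ ^ n
noncomputable def bb (n : ℕ) : ℝ := 1 - (4:ℝ)⁻¹ ^ n / 2
noncomputable def BB : Set ℝ := {1} ∪ ⋃ n, Set.Icc (aa n) (bb n)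

lemma qpos (n : ℕ) : 0 < (4:ℝ)⁻¹ ^ n := pow_pos (by norm_num) n
lemma qle1 (n : ℕ) : (4:ℝ)⁻¹ ^ n ≤ 1 := pow_le_one₀ (by norm_num) (by norm_num)
lemma qanti {n m : ℕ} (h : n ≤ m) : (4:ℝ)⁻¹ ^ m ≤ (4:ℝ)⁻¹ ^ n :=
  pow_le_pow_of_le_one (by norm_num) (by norm_num) h
lemma aa_lt_bb (n : ℕ) : aa n < bb n := by
  have := qpos n; unfold aa bb; linarith
lemma bb_lt_aa_succ (n : ℕ) : bb n < aa (n + 1) := by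
  have := qpos n; unfold aa bb; rw [pow_succ]; nlinarith
lemma aa_mono {n m : ℕ} (h : n ≤ m) : aa n ≤ aa m := by
  have := qanti h; unfold aa; linarith
lemma bb_mono {n m : ℕ} (h : n ≤ m) : bb n ≤ bb m := by
  have := qanti h; unfold bb; linarith
lemma aa_nonneg (n : ℕ) : 0 ≤ aa n := by have := qle1 n; unfold aa; linarith
lemma bb_le_one (n : ℕ) : bb n ≤ 1 := by have := qpos n; unfold bb; linarith
lemma aa_lt_one (n : ℕ) : aa n < 1 := by have := qpos n; unfold aa; linarith

lemma find_scale {t : ℝ} (h0 : 0 < t) (h1 : t ≤ 1) :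
    ∃ n, (4:ℝ)⁻¹ ^ (n + 1) < t ∧ t ≤ (4:ℝ)⁻¹ ^ n := by
  have hex : ∃ n, (4:ℝ)⁻¹ ^ n < t := exists_pow_lt_of_lt_one h0 (by norm_num)
  have hm := Nat.find_spec hex
  rcases Nat.eq_zero_or_pos (Nat.find hex) with h | h
  · rw [h] at hm; simp at hm; linarith
  · obtain ⟨k, hk⟩ := Nat.exists_eq_succ_of_ne_zero (Nat.pos_iff_ne_zero.mp h)
    refine ⟨k, ?_, ?_⟩
    · rw [hk] at hm; exact hm
    · have := Nat.find_min hex (by omega : k < Nat.find hex)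
      linarith [not_lt.mp this]

lemma BB_subset : BB ⊆ Set.Icc (0:ℝ) 1 := by
  rintro x (rfl | hx)
  · exact ⟨by norm_num, le_refl 1⟩
  · obtain ⟨n, hn⟩ := Set.mem_iUnion.mp hx
    exact ⟨le_trans (aa_nonneg n) hn.1, le_trans hn.2 (bb_le_one n)⟩

lemma BB_eq_diff : BB = Set.Icc (0:ℝ) 1 \ ⋃ n, Set.Ioo (bb n) (aa (n + 1)) := by
  ext x
  constructor
  · intro hx
    refine ⟨BB_subset hx, ?_⟩
    rw [Set.mem_iUnion]; push_neg
    intro n hn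
    rcases hx with rfl | hx
    · exact absurd hn.2 (not_lt.mpr (aa_lt_one (n+1)).le)
    · obtain ⟨m, hm⟩ := Set.mem_iUnion.mp hx
      rcases le_or_gt m n with h | h
      · exact absurd hn.1 (not_lt.mpr (hm.2.trans (bb_mono h)))
      · exact absurd hn.2 (not_lt.mpr ((aa_mono h).trans hm.1))
  · rintro ⟨⟨hx0, hx1⟩, hgap⟩
    rcases eq_or_lt_of_le hx1 with rfl | hx1
    · exact Or.inl rfl
    · obtain ⟨m, hm1, hm2⟩ := find_scale (by linarith : (0:ℝ) < 1 - x) (by linarith)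
      right
      refine Set.mem_iUnion.mpr ⟨m, ?_, ?_⟩
      · unfold aa; linarith
      · have hlt : x < aa (m + 1) := by unfold aa; rw [pow_succ] at hm1 ⊢; linarith
        by_contra hb
        rw [Set.mem_iUnion] at hgap; push_neg at hb
        exact hgap ⟨m, hb, hlt⟩

lemma BB_closed : IsClosed BB := by
  rw [BB_eq_diff]
  exact isClosed_Icc.sdiff (isOpen_iUnion fun n => isOpen_Ioo)

lemma BB_compact : IsCompact BB :=
  (isCompact_Icc : IsCompact (Set.Icc (0:ℝ) 1)).of_isClosed_subset BB_closed BB_subset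

lemma BB_nonempty : BB.Nonempty := ⟨1, Or.inl rfl⟩

lemma aa_succ (n : ℕ) : aa (n + 1) = aa n / 4 + 3 / 4 := by
  unfold aa; rw [pow_succ]; ring
lemma bb_succ (n : ℕ) : bb (n + 1) = bb n / 4 + 3 / 4 := by
  unfold bb; rw [pow_succ]; ring

lemma J0_aa : aa 0 = 0 := by unfold aa; norm_num
lemma J0_bb : bb 0 = 1 / 2 := by unfold bb; norm_num

lemma BB_fixed : BB = (fun x => x / 2) '' BB ∪ (fun x => x / 4 + 1 / 4) '' BB ∪
    (fun x => x / 4 + 3 / 4) '' BB := by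
  apply Set.Subset.antisymm
  · rintro x (rfl | hx)
    · exact Or.inr ⟨1, Or.inl rfl, by norm_num⟩
    · obtain ⟨n, hn1, hn2⟩ := Set.mem_iUnion.mp hx
      match n with
      | Nat.succ k =>
        refine Or.inr ⟨4 * x - 3, Or.inr (Set.mem_iUnion.mpr ⟨k, ?_, ?_⟩), by ring⟩
        · rw [aa_succ] at hn1; linarith
        · rw [bb_succ] at hn2; linarith
      | 0 =>
        rw [J0_aa] at hn1; rw [J0_bb] at hn2
        rcases eq_or_lt_of_le hn2 with rfl | hlt
        · exact Or.inl (Or.inl ⟨1, Or.inl rfl, by norm_num⟩)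
        · have hs0 : (0:ℝ) < 1 - 2 * x := by linarith
          have hs1 : 1 - 2 * x ≤ 1 := by linarith
          obtain ⟨m, hm1, hm2⟩ := find_scale hs0 hs1
          rw [pow_succ] at hm1
          rcases le_or_gt ((4:ℝ)⁻¹ ^ m / 2) (1 - 2 * x) with hc | hc
          · refine Or.inl (Or.inl ⟨2 * x, Or.inr (Set.mem_iUnion.mpr ⟨m, ?_, ?_⟩), by ring⟩)
            · unfold aa; linarith
            · unfold bb; linarith
          · refine Or.inl (Or.inr ⟨4 * x - 1, Or.inr (Set.mem_iUnion.mpr ⟨m, ?_, ?_⟩), by ring⟩)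
            · unfold aa; linarith
            · unfold bb; linarith
  · rintro x ((⟨y, hy, rfl⟩ | ⟨y, hy, rfl⟩) | ⟨y, hy, rfl⟩)
    · obtain ⟨hy0, hy1⟩ := BB_subset hy
      exact Or.inr (Set.mem_iUnion.mpr ⟨0, by rw [J0_aa]; linarith, by rw [J0_bb]; linarith⟩)
    · obtain ⟨hy0, hy1⟩ := BB_subset hy
      exact Or.inr (Set.mem_iUnion.mpr ⟨0, by rw [J0_aa]; linarith, by rw [J0_bb]; linarith⟩)
    · rcases hy with rfl | hy
      · exact Or.inl (by norm_num)
      · obtain ⟨k, hk1, hk2⟩ := Set.mem_iUnion.mp hy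
        refine Or.inr (Set.mem_iUnion.mpr ⟨k + 1, ?_, ?_⟩)
        · rw [aa_succ]; linarith
        · rw [bb_succ]; linarith

lemma lip_half : LipschitzWith 2⁻¹ (fun x : ℝ => x / 2) := by
  apply LipschitzWith.of_dist_le_mul
  intro x y
  rw [Real.dist_eq, Real.dist_eq]
  have : x / 2 - y / 2 = (x - y) / 2 := by ring
  rw [this, abs_div, abs_two]
  simp only [NNReal.coe_inv, NNReal.coe_ofNat]
  linarith

lemma lip_q (c : ℝ) : LipschitzWith 2⁻¹ (fun x : ℝ => x / 4 + c) := by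
  apply LipschitzWith.of_dist_le_mul
  intro x y
  rw [Real.dist_eq, Real.dist_eq]
  have : x / 4 + c - (y / 4 + c) = (x - y) / 4 := by ring
  rw [this, abs_div]
  simp only [NNReal.coe_inv, NNReal.coe_ofNat, abs_of_nonneg (by norm_num : (0:ℝ) ≤ 4)]
  have := abs_nonneg (x - y)
  linarith

lemma attractor_unique (f g h : ℝ → ℝ) (hf : LipschitzWith 2⁻¹ f)
    (hg : LipschitzWith 2⁻¹ g) (hh : LipschitzWith 2⁻¹ h)
    (A B : Set ℝ) (hAne : A.Nonempty) (hAc : IsCompact A)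
    (hBne : B.Nonempty) (hBc : IsCompact B)
    (hA : A = f '' A ∪ g '' A ∪ h '' A) (hB : B = f '' B ∪ g '' B ∪ h '' B) :
    A = B := by
  set d := hausdorffEdist A B with hd
  have hfin : d ≠ ⊤ :=
    Metric.hausdorffEdist_ne_top_of_nonempty_of_bounded hAne hBne hAc.isBounded hBc.isBounded
  have step : ∀ (φ : ℝ → ℝ), LipschitzWith 2⁻¹ φ → ∀ (S T : Set ℝ), IsCompact T →
      T.Nonempty → ∀ y ∈ S, ∃ z ∈ φ '' T, edist (φ y) z ≤ 2⁻¹ * hausdorffEdist S T := by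
    intro φ hφ S T hTc hTne y hy
    obtain ⟨y', hy', hyd⟩ := hTc.exists_infEdist_eq_edist hTne y
    refine ⟨φ y', Set.mem_image_of_mem φ hy', ?_⟩
    calc edist (φ y) (φ y') ≤ 2⁻¹ * edist y y' := by
          have := hφ y y'
          simpa using this
      _ = 2⁻¹ * infEdist y T := by exact congrArg _ hyd.symm
      _ ≤ 2⁻¹ * hausdorffEdist S T := by
          gcongr
          exact infEdist_le_hausdorffEdist_of_mem hy
  have key : d ≤ 2⁻¹ * d := by
    apply hausdorffEdist_le_of_mem_edist
    · intro x hx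
      rw [hA] at hx
      rcases hx with (⟨y, hy, rfl⟩ | ⟨y, hy, rfl⟩) | ⟨y, hy, rfl⟩
      · obtain ⟨z, hz, hze⟩ := step f hf A B hBc hBne y hy
        exact ⟨z, hB ▸ Or.inl (Or.inl hz), hze⟩
      · obtain ⟨z, hz, hze⟩ := step g hg A B hBc hBne y hy
        exact ⟨z, hB ▸ Or.inl (Or.inr hz), hze⟩
      · obtain ⟨z, hz, hze⟩ := step h hh A B hBc hBne y hy
        exact ⟨z, hB ▸ Or.inr hz, hze⟩
    · intro x hx
      rw [hB] at hx
      have hcomm : hausdorffEdist B A = d := hausdorffEdist_comm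
      rcases hx with (⟨y, hy, rfl⟩ | ⟨y, hy, rfl⟩) | ⟨y, hy, rfl⟩
      · obtain ⟨z, hz, hze⟩ := step f hf B A hAc hAne y hy
        exact ⟨z, hA ▸ Or.inl (Or.inl hz), by rw [← hcomm]; exact hze⟩
      · obtain ⟨z, hz, hze⟩ := step g hg B A hAc hAne y hy
        exact ⟨z, hA ▸ Or.inl (Or.inr hz), by rw [← hcomm]; exact hze⟩
      · obtain ⟨z, hz, hze⟩ := step h hh B A hAc hAne y hy
        exact ⟨z, hA ▸ Or.inr hz, by rw [← hcomm]; exact hze⟩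
  have hd0 : d = 0 := by
    by_contra h0
    have hhalf : 2⁻¹ * d < d := by
      rw [← ENNReal.div_eq_inv_mul]
      exact ENNReal.half_lt_self h0 hfin
    exact absurd key (not_le.mpr hhalf)
  exact hausdorffEdist_zero_iff_eq_of_closed hAc.isClosed hBc.isClosed |>.mp hd0

lemma bb_lt_aa {n m : ℕ} (h : n < m) : bb n < aa m :=
  (bb_lt_aa_succ n).trans_le (aa_mono h)

lemma aa_tendsto : Tendsto aa atTop (nhds 1) := by
  have h : Tendsto (fun n : ℕ => (4:ℝ)⁻¹ ^ n) atTop (nhds 0) :=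
    tendsto_pow_atTop_nhds_zero_of_lt_one (by norm_num) (by norm_num)
  have := Tendsto.sub (tendsto_const_nhds : Tendsto (fun _ : ℕ => (1:ℝ)) atTop (nhds 1)) h
  rw [sub_zero] at this
  exact this

theorem mendivil_attractor (A : Set ℝ) (hne : A.Nonempty) (hc : IsCompact A)
    (hA : A = (fun x => x / 2) '' A ∪ (fun x => x / 4 + 1 / 4) '' A ∪
        (fun x => x / 4 + 3 / 4) '' A) :
    (¬ ∃ (n : ℕ) (a b : Fin n → ℝ), (∀ i, a i ≤ b i) ∧
        A = ⋃ i, Set.Icc (a i) (b i)) ∧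
    ∃ a b : ℕ → ℝ, (∀ n, a n < b n) ∧
        (Pairwise (Function.onFun Disjoint fun n => Set.Icc (a n) (b n))) ∧
        A = closure (⋃ n, Set.Icc (a n) (b n)) ∧
        Filter.Tendsto a Filter.atTop (nhds 1) := by
  have hAB : A = BB :=
    attractor_unique (fun x => x / 2) (fun x => x / 4 + 1 / 4) (fun x => x / 4 + 3 / 4)
      lip_half (lip_q _) (lip_q _) A BB hne hc BB_nonempty BB_compact hA BB_fixed
  constructor
  · rintro ⟨N, av, bv, hab, hEq⟩
    have hNer : ∀ n : ℕ, ∃ i : Fin N, aa n ∈ Set.Icc (av i) (bv i) := by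
      intro n
      have hmem : aa n ∈ A := by
        rw [hAB]
        exact Or.inr (Set.mem_iUnion.mpr ⟨n, le_refl _, (aa_lt_bb n).le⟩)
      rw [hEq] at hmem
      exact Set.mem_iUnion.mp hmem
    choose F hF using hNer
    have main : ∀ n m : ℕ, n < m → F n = F m → False := by
      intro n m h hFeq
      set g : ℝ := (bb n + aa (n + 1)) / 2 with hgdef
      have hg1 : bb n < g := by have := bb_lt_aa_succ n; rw [hgdef]; linarith
      have hg2 : g < aa (n + 1) := by have := bb_lt_aa_succ n; rw [hgdef]; linarith
      have h1 := hF n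
      have h2 := hF m
      rw [← hFeq] at h2
      have hgIcc : g ∈ Set.Icc (av (F n)) (bv (F n)) := by
        constructor
        · exact le_trans h1.1 (le_trans (aa_lt_bb n).le hg1.le)
        · exact le_trans (le_trans hg2.le (aa_mono h)) h2.2
      have hgA : g ∈ A := by rw [hEq]; exact Set.mem_iUnion.mpr ⟨F n, hgIcc⟩
      rw [hAB] at hgA
      rcases hgA with hg1' | hgB
      · rw [Set.mem_singleton_iff] at hg1'
        rw [hg1'] at hg2
        exact absurd (hg2.trans (aa_lt_one (n + 1))) (lt_irrefl 1)
      · obtain ⟨k, hk1, hk2⟩ := Set.mem_iUnion.mp hgB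
        rcases le_or_gt k n with hkn | hkn
        · exact absurd (lt_of_le_of_lt (hk2.trans (bb_mono hkn)) hg1) (lt_irrefl g)
        · exact absurd (lt_of_lt_of_le hg2 (le_trans (aa_mono hkn) hk1)) (lt_irrefl g)
    obtain ⟨n, m, hnm, hFeq⟩ := Finite.exists_ne_map_eq_of_infinite F
    rcases hnm.lt_or_gt with h | h
    · exact main n m h hFeq
    · exact main m n h hFeq.symm
  · refine ⟨aa, bb, aa_lt_bb, ?_, ?_, aa_tendsto⟩
    · intro n m hnm
      have disj : ∀ p q : ℕ, p < q → Disjoint (Set.Icc (aa p) (bb p)) (Set.Icc (aa q) (bb q)) := by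
        intro p q hpq
        apply Set.disjoint_left.mpr
        intro x hx1 hx2
        exact absurd (lt_of_le_of_lt hx1.2 ((bb_lt_aa hpq).trans_le hx2.1)) (lt_irrefl x)
      rcases hnm.lt_or_gt with h | h
      · exact disj n m h
      · exact (disj m n h).symm
    · apply Set.Subset.antisymm
      · rw [hAB]
        rintro x (rfl | hx)
        · apply mem_closure_of_tendsto aa_tendsto
          filter_upwards with n
          exact Set.mem_iUnion.mpr ⟨n, le_refl _, (aa_lt_bb n).le⟩
        · exact subset_closure hx
      · apply closure_minimal _ hc.isClosed
        intro x hx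
        rw [hAB]
        exact Or.inr hx
end

section
/- Let σ and μ be Borel probability measures on ℝ with support of σ contained in [-1,1], let 0 < δ < 1, δ̄ = 1 - δ, and suppose μ satisfies ∫ f dμ = ∫∫ f(δs + δ̄β) dμ(s) dσ(β) for all bounded continuous f. Then supp(σ) ⊆ supp(μ). -/
open MeasureTheory Metric Set

/-- The topological support of a Borel measure on ℝ: points all of whose
neighborhoods have positive measure. -/
def msupport (ν : MeasureTheory.Measure ℝ) : Set ℝ :=
  {x | ∀ ε > 0, 0 < ν (Metric.ball x ε)}

theorem supp_sigma_subset_supp_mu (σ μ : Measure ℝ)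
    [IsProbabilityMeasure σ] [IsProbabilityMeasure μ]
    (δ : ℝ) (hδ0 : 0 < δ) (hδ1 : δ < 1)
    (hσ : msupport σ ⊆ Set.Icc (-1 : ℝ) 1)
    (hinv : ∀ f : BoundedContinuousFunction ℝ ℝ,
      ∫ x, f x ∂μ = ∫ β, ∫ s, f (δ * s + (1 - δ) * β) ∂μ ∂σ) :
    msupport σ ⊆ msupport μ := by
  intro β₀ hβ₀ ε hε
  set m : ℝ := (1 + 3*δ)/(4*δ) with hm_def
  have hm1 : 1 < m := by
    rw [hm_def, lt_div_iff₀ (by linarith)]; linarith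
  -- One-step expansion lemma
  have step : ∀ e : ℝ, 0 < e → 0 < μ (ball β₀ (m * e)) → 0 < μ (ball β₀ e) := by
    intro e he hμm
    set r : ℝ := (3 + δ)/4 * e with hr_def
    have hre : 0 < e - r := by rw [hr_def]; nlinarith
    -- the bump function
    set g : ℝ → ℝ := fun x => max 0 (min 1 ((e - dist x β₀)/(e - r))) with hg_def
    have hg0 : ∀ x, 0 ≤ g x := fun x => le_max_left _ _
    have hg1 : ∀ x, g x ≤ 1 := by
      intro x
      apply max_le (by norm_num) (min_le_left _ _)
    have hgone : ∀ x : ℝ, dist x β₀ ≤ r → g x = 1 := by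
      intro x hx
      have h1 : (1:ℝ) ≤ (e - dist x β₀)/(e - r) := by
        rw [le_div_iff₀ hre]; linarith
      simp only [hg_def]
      rw [min_eq_left h1, max_eq_right (by norm_num : (0:ℝ) ≤ 1)]
    have hgzero : ∀ x : ℝ, e ≤ dist x β₀ → g x = 0 := by
      intro x hx
      have h1 : (e - dist x β₀)/(e - r) ≤ 0 := by
        apply div_nonpos_of_nonpos_of_nonneg (by linarith) hre.le
      simp only [hg_def]
      rw [max_eq_left (le_trans (min_le_right _ _) h1)]
    have hgc : Continuous g := by
      apply continuous_const.max
      apply continuous_const.min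
      exact ((continuous_const.sub (continuous_id.dist continuous_const)).div_const _)
    set f : BoundedContinuousFunction ℝ ℝ :=
      BoundedContinuousFunction.ofNormedAddCommGroup g hgc 1 (fun x => by
        rw [Real.norm_eq_abs, abs_of_nonneg (hg0 x)]; exact hg1 x) with hf_def
    have hfx : ∀ x, f x = g x := fun x => rfl
    -- the inner integral as a function of β
    set F : ℝ → ℝ := fun β => ∫ s, f (δ * s + (1 - δ) * β) ∂μ with hF_def
    -- for each β, the composed function is a BCF, hence integrable
    have hcomp : ∀ β : ℝ, Integrable (fun s => f (δ * s + (1 - δ) * β)) μ := by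
      intro β
      exact (f.compContinuous ⟨fun s => δ * s + (1 - δ) * β, (continuous_const.mul continuous_id).add continuous_const⟩).integrable μ
    set c : ℝ := (μ (ball β₀ (m * e))).toReal with hc_def
    have hc : 0 < c := ENNReal.toReal_pos hμm.ne' (measure_ne_top μ _)
    -- inner bound on the small ball around β₀
    have hinner : ∀ β ∈ ball β₀ (e/2), c ≤ F β := by
      intro β hβ
      have hβd : dist β β₀ < e/2 := mem_ball.mp hβ
      have key : ∀ s : ℝ, (ball β₀ (m * e)).indicator (fun _ => (1:ℝ)) s
          ≤ f (δ * s + (1 - δ) * β) := by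
        intro s
        by_cases hs : s ∈ ball β₀ (m * e)
        · rw [indicator_of_mem hs]
          have hsd : dist s β₀ < m * e := mem_ball.mp hs
          have hd : dist (δ * s + (1 - δ) * β) β₀ ≤ r := by
            have h1 : δ * s + (1 - δ) * β - β₀ = δ * (s - β₀) + (1 - δ) * (β - β₀) := by
              ring
            rw [Real.dist_eq, h1]
            calc |δ * (s - β₀) + (1 - δ) * (β - β₀)|
                ≤ |δ * (s - β₀)| + |(1 - δ) * (β - β₀)| := abs_add_le _ _
              _ = δ * |s - β₀| + (1 - δ) * |β - β₀| := by
                  rw [abs_mul, abs_mul, abs_of_pos hδ0, abs_of_pos (show (0:ℝ) < 1 - δ by linarith)]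
              _ ≤ r := by
                  have e1 : |s - β₀| < m * e := by rwa [Real.dist_eq] at hsd
                  have e2 : |β - β₀| < e/2 := by rwa [Real.dist_eq] at hβd
                  have e3 : 0 ≤ |s - β₀| := abs_nonneg _
                  have e4 : 0 ≤ |β - β₀| := abs_nonneg _
                  have hme : δ * m = (1 + 3*δ)/4 := by
                    rw [hm_def]; field_simp
                  rw [hr_def]
                  nlinarith [mul_le_mul_of_nonneg_left e1.le hδ0.le]
          rw [hfx]
          rw [hgone _ hd]
        · rw [indicator_of_notMem hs]
          rw [hfx]; exact hg0 _
      calc c = ∫ s, (ball β₀ (m * e)).indicator (fun _ => (1:ℝ)) s ∂μ := by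
              rw [integral_indicator_const _ measurableSet_ball, smul_eq_mul, mul_one]; rfl
        _ ≤ F β := by
              apply integral_mono _ (hcomp β) key
              exact (integrable_const (1:ℝ)).indicator measurableSet_ball
    have hFnonneg : ∀ β, 0 ≤ F β := by
      intro β
      exact integral_nonneg fun s => hg0 _
    -- F is continuous (dominated convergence)
    have hFcont : Continuous F := by
      apply continuous_of_dominated (bound := fun _ => (1:ℝ))
      · intro β; exact (hcomp β).aestronglyMeasurable
      · intro β
        filter_upwards with s
        rw [Real.norm_eq_abs, hfx, abs_of_nonneg (hg0 _)]
        exact hg1 _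
      · exact integrable_const 1
      · filter_upwards with s
        exact hgc.comp ((continuous_const.mul continuous_const).add (continuous_const.mul continuous_id))
    have hFbdd : Integrable F σ := by
      apply Integrable.mono' (integrable_const (1:ℝ)) hFcont.aestronglyMeasurable
      filter_upwards with β
      rw [Real.norm_eq_abs, abs_of_nonneg (hFnonneg β)]
      calc F β ≤ ∫ _, (1:ℝ) ∂μ :=
            integral_mono (hcomp β) (integrable_const 1) fun s => hg1 _
        _ = 1 := by simp
    -- positivity of the outer integral
    have hσball : 0 < σ (ball β₀ (e/2)) := hβ₀ (e/2) (by linarith)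
    have houter : 0 < ∫ β, F β ∂σ := by
      have hbd : ∀ β, (ball β₀ (e/2)).indicator (fun _ => c) β ≤ F β := by
        intro β
        by_cases hβ : β ∈ ball β₀ (e/2)
        · rw [indicator_of_mem hβ]; exact hinner β hβ
        · rw [indicator_of_notMem hβ]; exact hFnonneg β
      calc (0:ℝ) < (σ (ball β₀ (e/2))).toReal * c := by
              apply mul_pos (ENNReal.toReal_pos hσball.ne' (measure_ne_top σ _)) hc
        _ = ∫ β, (ball β₀ (e/2)).indicator (fun _ => c) β ∂σ := by
              rw [integral_indicator_const _ measurableSet_ball, smul_eq_mul]; rfl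
        _ ≤ ∫ β, F β ∂σ := by
              apply integral_mono _ hFbdd hbd
              exact (integrable_const c).indicator measurableSet_ball
    have hint : 0 < ∫ x, f x ∂μ := by
      rw [hinv f]; exact houter
    -- conclude μ (ball β₀ e) > 0
    by_contra hcon
    push_neg at hcon
    have hnull : μ (ball β₀ e) = 0 := le_antisymm (by simpa using hcon) (zero_le)
    have hae : ∀ᵐ x ∂μ, x ∉ ball β₀ e := by
      rw [ae_iff]
      simpa only [not_not, setOf_mem_eq] using hnull
    have : ∫ x, f x ∂μ = 0 := by
      rw [show (0:ℝ) = ∫ _, (0:ℝ) ∂μ by simp]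
      apply integral_congr_ae
      filter_upwards [hae] with x hx
      rw [hfx, hgzero x (by simpa [mem_ball, not_lt] using hx)]
    rw [this] at hint
    exact lt_irrefl 0 hint
  -- base case: some big ball has positive measure
  obtain ⟨R, hμR⟩ : ∃ R : ℕ, 0 < μ (ball β₀ R) := by
    by_contra h
    push_neg at h
    have hnull : ∀ n : ℕ, μ (ball β₀ n) = 0 := fun n =>
      le_antisymm (by simpa using h n) (zero_le)
    have huniv : (univ : Set ℝ) ⊆ ⋃ n : ℕ, ball β₀ n := by
      intro x _
      obtain ⟨n, hn⟩ := exists_nat_gt (dist x β₀)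
      exact mem_iUnion.mpr ⟨n, mem_ball.mpr hn⟩
    have : μ (univ : Set ℝ) = 0 := by
      apply le_antisymm _ (zero_le)
      calc μ univ ≤ μ (⋃ n : ℕ, ball β₀ n) := measure_mono huniv
        _ ≤ ∑' n : ℕ, μ (ball β₀ n) := measure_iUnion_le _
        _ = 0 := by simp [hnull]
    simp [measure_univ] at this
  -- iteration
  have iter : ∀ n : ℕ, ∀ e : ℝ, 0 < e → 0 < μ (ball β₀ (m ^ n * e)) → 0 < μ (ball β₀ e) := by
    intro n
    induction n with
    | zero => intro e he h; simpa using h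
    | succ n ih =>
      intro e he h
      apply step e he
      apply ih (m * e) (by positivity)
      have : m ^ n * (m * e) = m ^ (n+1) * e := by ring
      rwa [this]
  obtain ⟨n, hn⟩ := pow_unbounded_of_one_lt ((R : ℝ) / ε) hm1
  apply iter n ε hε
  have hRle : (R : ℝ) ≤ m ^ n * ε := by
    rw [div_lt_iff₀ hε] at hn
    linarith
  exact lt_of_lt_of_le hμR (measure_mono (ball_subset_ball hRle))
end

section
/- Let σ and μ be Borel probability measures on ℝ with supp(σ) ⊆ [-1,1], 0 < δ < 1, and suppose μ satisfies ∫ f dμ = ∫∫ f(δs + (1-δ)β) dμ(s) dσ(β) for all bounded continuous f. Then supp(μ) is contained in the 2δ-neighborhood of supp(σ), i.e. every point of supp(μ) is within distance 2δ of supp(σ). -/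
open MeasureTheory Metric Set
set_option maxHeartbeats 1000000

lemma msupport_compl_null (ν : Measure ℝ) : ν (msupport ν)ᶜ = 0 := by
  apply measure_null_of_locally_null
  intro x hx
  simp only [msupport, mem_compl_iff, mem_setOf_eq, not_forall] at hx
  obtain ⟨ε, hε, h0⟩ := hx
  push_neg at h0
  exact ⟨ball x ε, mem_nhdsWithin_of_mem_nhds (ball_mem_nhds x hε),
    le_antisymm h0 zero_le⟩

lemma msupport_closed (ν : Measure ℝ) : IsClosed (msupport ν) := by
  rw [← isOpen_compl_iff, Metric.isOpen_iff]
  intro x hx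
  simp only [msupport, mem_compl_iff, mem_setOf_eq, not_forall] at hx
  obtain ⟨ε, hε, h0⟩ := hx
  push_neg at h0
  refine ⟨ε/2, by positivity, fun y hy => ?_⟩
  simp only [msupport, mem_compl_iff, mem_setOf_eq, not_forall]
  refine ⟨ε/2, by positivity, ?_⟩
  have hsub : ball y (ε/2) ⊆ ball x ε := by
    intro z hz
    have := mem_ball.mp hz
    have hyx := mem_ball.mp hy
    rw [mem_ball]
    calc dist z x ≤ dist z y + dist y x := dist_triangle _ _ _
      _ < ε/2 + ε/2 := by linarith
      _ = ε := by ring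
  exact not_lt.mpr (le_trans (measure_mono hsub) h0)

lemma msupport_nonempty (ν : Measure ℝ) [IsProbabilityMeasure ν] :
    (msupport ν).Nonempty := by
  by_contra h
  rw [not_nonempty_iff_eq_empty] at h
  have h2 := msupport_compl_null ν
  rw [h, compl_empty] at h2
  simp [measure_univ] at h2

lemma ae_mem_msupport (ν : Measure ℝ) : ∀ᵐ x ∂ν, x ∈ msupport ν := by
  rw [Filter.eventually_iff, mem_ae_iff]
  exact msupport_compl_null ν

lemma tail_measurable (c : ℝ) : MeasurableSet {t : ℝ | c ≤ |t|} :=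
  measurableSet_le measurable_const measurable_id.abs

lemma tail_step (σ μ : Measure ℝ)
    [IsProbabilityMeasure σ] [IsProbabilityMeasure μ]
    (δ : ℝ) (hδ0 : 0 < δ) (hδ1 : δ < 1)
    (hσ : msupport σ ⊆ Set.Icc (-1 : ℝ) 1)
    (hinv : ∀ f : BoundedContinuousFunction ℝ ℝ,
      ∫ x, f x ∂μ = ∫ β, ∫ s, f (δ * s + (1 - δ) * β) ∂μ ∂σ)
    {a b : ℝ} (ha : 1 < a) (hab : a < b) :
    μ {t | b ≤ |t|} ≤ μ {s | (a - (1 - δ))/δ ≤ |s|} := by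
  set a' := (a - (1 - δ))/δ with ha'
  have hba : (0:ℝ) < b - a := by linarith
  -- the cut function
  have hcont : Continuous (fun t : ℝ => min 1 (max 0 ((|t| - a)/(b-a)))) := by
    apply Continuous.min continuous_const
    apply Continuous.max continuous_const
    exact ((continuous_abs.sub continuous_const).div_const _)
  have hbd : ∀ t : ℝ, ‖min 1 (max 0 ((|t| - a)/(b-a)))‖ ≤ 1 := by
    intro t
    rw [Real.norm_eq_abs, abs_le]
    constructor
    · have : (0:ℝ) ≤ max 0 ((|t| - a)/(b-a)) := le_max_left _ _
      have := le_min (zero_le_one) this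
      linarith [le_min zero_le_one this]
    · exact min_le_left _ _
  set f : BoundedContinuousFunction ℝ ℝ :=
    BoundedContinuousFunction.ofNormedAddCommGroup _ hcont 1 hbd with hf
  have hfval : ∀ t, f t = min 1 (max 0 ((|t| - a)/(b-a))) := fun t => rfl
  have hf01 : ∀ t, 0 ≤ f t ∧ f t ≤ 1 := by
    intro t
    rw [hfval]
    exact ⟨le_min zero_le_one (le_max_left _ _), min_le_left _ _⟩
  have hfone : ∀ t, b ≤ |t| → f t = 1 := by
    intro t ht
    rw [hfval]
    have h1 : (1:ℝ) ≤ (|t| - a)/(b-a) := (le_div_iff₀ hba).mpr (by linarith)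
    rw [min_eq_left]
    exact le_trans h1 (le_max_right _ _)
  have hfzero : ∀ t, |t| < a → f t = 0 := by
    intro t ht
    rw [hfval]
    have h1 : (|t| - a)/(b-a) ≤ 0 := div_nonpos_iff.mpr (Or.inr ⟨by linarith, by linarith⟩)
    rw [max_eq_left h1, min_eq_right zero_le_one]
  -- lower bound for LHS
  have hL : (μ {t | b ≤ |t|}).toReal ≤ ∫ x, f x ∂μ := by
    have := integral_indicator_const (1:ℝ) (tail_measurable b) (μ := μ)
    rw [smul_eq_mul, mul_one, measureReal_def] at this
    rw [← this]
    apply integral_mono ((integrable_const (1:ℝ)).indicator (tail_measurable b))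
      (f.integrable μ)
    intro t
    by_cases ht : t ∈ {t : ℝ | b ≤ |t|}
    · rw [indicator_of_mem ht, hfone t ht]
    · rw [indicator_of_notMem ht]; exact (hf01 t).1
  -- upper bound for RHS
  have hR : ‖∫ β, ∫ s, f (δ * s + (1 - δ) * β) ∂μ ∂σ‖ ≤
      (μ {s | a' ≤ |s|}).toReal * (σ univ).toReal := by
    apply norm_integral_le_of_norm_le_const
    filter_upwards [ae_mem_msupport σ] with β hβ
    have hβ1 : |β| ≤ 1 := abs_le.mpr ⟨(hσ hβ).1, (hσ hβ).2⟩
    have hinner_nonneg : 0 ≤ ∫ s, f (δ * s + (1 - δ) * β) ∂μ :=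
      integral_nonneg fun s => (hf01 _).1
    rw [Real.norm_eq_abs, abs_of_nonneg hinner_nonneg]
    have := integral_indicator_const (1:ℝ) (tail_measurable a') (μ := μ)
    rw [smul_eq_mul, mul_one, measureReal_def] at this
    rw [← this]
    have hint : Integrable (fun s => f (δ * s + (1 - δ) * β)) μ := by
      have : Continuous (fun s : ℝ => δ * s + (1 - δ) * β) := by continuity
      exact (f.compContinuous ⟨_, this⟩).integrable μ
    apply integral_mono hint ((integrable_const (1:ℝ)).indicator (tail_measurable a'))
    intro s
    by_cases hs : s ∈ {s : ℝ | a' ≤ |s|}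
    · rw [indicator_of_mem hs]; exact (hf01 _).2
    · rw [indicator_of_notMem hs]
      simp only [mem_setOf_eq, not_le] at hs
      have h2 : |δ * s + (1 - δ) * β| < a := by
        calc |δ * s + (1 - δ) * β| ≤ δ * |s| + (1 - δ) * |β| := by
              calc _ ≤ |δ * s| + |(1-δ)*β| := abs_add_le _ _
                _ = δ * |s| + (1-δ) * |β| := by
                    rw [abs_mul, abs_mul, abs_of_pos hδ0, abs_of_pos (by linarith : (0:ℝ) < 1 - δ)]
          _ < δ * a' + (1 - δ) * 1 := by
              apply add_lt_add_of_lt_of_le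
              · exact (mul_lt_mul_iff_right₀ hδ0).mpr hs
              · exact mul_le_mul_of_nonneg_left hβ1 (by linarith)
          _ = a := by rw [ha']; field_simp; ring
      exact le_of_eq (hfzero _ h2)
  rw [measure_univ, ENNReal.toReal_one, mul_one] at hR
  have key : (μ {t | b ≤ |t|}).toReal ≤ (μ {s | a' ≤ |s|}).toReal := by
    calc (μ {t | b ≤ |t|}).toReal ≤ ∫ x, f x ∂μ := hL
      _ = ∫ β, ∫ s, f (δ * s + (1 - δ) * β) ∂μ ∂σ := hinv f
      _ ≤ ‖∫ β, ∫ s, f (δ * s + (1 - δ) * β) ∂μ ∂σ‖ := le_abs_self _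
      _ ≤ _ := hR
  exact (ENNReal.toReal_le_toReal (measure_ne_top _ _) (measure_ne_top _ _)).mp key

lemma tail_zero (σ μ : Measure ℝ)
    [IsProbabilityMeasure σ] [IsProbabilityMeasure μ]
    (δ : ℝ) (hδ0 : 0 < δ) (hδ1 : δ < 1)
    (hσ : msupport σ ⊆ Set.Icc (-1 : ℝ) 1)
    (hinv : ∀ f : BoundedContinuousFunction ℝ ℝ,
      ∫ x, f x ∂μ = ∫ β, ∫ s, f (δ * s + (1 - δ) * β) ∂μ ∂σ)
    {b : ℝ} (hb : 1 < b) : μ {t | b ≤ |t|} = 0 := by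
  set ε₀ : ℝ := (1 - δ) * (b - 1) / (2 * δ) with hε₀
  have hε₀pos : 0 < ε₀ := by
    apply div_pos (mul_pos (by linarith) (by linarith)) (by linarith)
  -- iteration
  have hiter : ∀ n : ℕ, μ {t | b ≤ |t|} ≤ μ {t | b + n * ε₀ ≤ |t|} := by
    intro n
    induction n with
    | zero => simp
    | succ n ih =>
      refine le_trans ih ?_
      set bn : ℝ := b + n * ε₀ with hbn
      have hbn1 : b ≤ bn := by
        have : 0 ≤ (n : ℝ) * ε₀ := mul_nonneg (Nat.cast_nonneg n) hε₀pos.le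
        linarith
      have hbngt : 1 < bn := lt_of_lt_of_le hb hbn1
      set an : ℝ := (bn * (1 + δ) + 1 - δ) / 2 with han
      have h1an : 1 < an := by rw [han]; nlinarith
      have hanbn : an < bn := by rw [han]; nlinarith
      have hstep := tail_step σ μ δ hδ0 hδ1 hσ hinv h1an hanbn
      refine le_trans hstep (measure_mono ?_)
      intro t ht
      simp only [mem_setOf_eq] at ht ⊢
      have harith : b + (n + 1 : ℕ) * ε₀ ≤ (an - (1 - δ)) / δ := by
        have hX : (0:ℝ) ≤ (n:ℝ) * ε₀ := mul_nonneg (Nat.cast_nonneg n) hε₀pos.le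
        have hXY : (n:ℝ) * ε₀ * δ ≤ (n:ℝ) * ε₀ := by nlinarith
        have hZ : ε₀ * δ * 2 = (1-δ)*(b-1) := by rw [hε₀]; field_simp
        have hA : an * 2 = bn * (1+δ) + 1 - δ := by rw [han]; ring
        rw [le_div_iff₀ hδ0]
        push_cast
        nlinarith [hXY, hZ, hA, hbn]
      exact le_trans harith ht
  -- limit
  have hanti : Antitone (fun n : ℕ => {t : ℝ | b + n * ε₀ ≤ |t|}) := by
    intro n m hnm t ht
    simp only [mem_setOf_eq] at ht ⊢
    have : (n:ℝ) * ε₀ ≤ (m:ℝ) * ε₀ :=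
      mul_le_mul_of_nonneg_right (Nat.cast_le.mpr hnm) hε₀pos.le
    linarith
  have hinter : ⋂ n : ℕ, {t : ℝ | b + n * ε₀ ≤ |t|} = ∅ := by
    ext t
    simp only [mem_iInter, mem_setOf_eq, mem_empty_iff_false, iff_false, not_forall, not_le]
    obtain ⟨n, hn⟩ := exists_nat_gt ((|t| - b) / ε₀)
    refine ⟨n, ?_⟩
    rw [div_lt_iff₀ hε₀pos] at hn
    linarith
  have htend := MeasureTheory.tendsto_measure_iInter_atTop
    (μ := μ) (fun n => (tail_measurable _).nullMeasurableSet) hanti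
    ⟨0, measure_ne_top _ _⟩
  rw [hinter] at htend
  simp only [measure_empty] at htend
  have := ge_of_tendsto' htend (fun n => hiter n)
  exact le_antisymm this zero_le

lemma supp_subset_Icc (σ μ : Measure ℝ)
    [IsProbabilityMeasure σ] [IsProbabilityMeasure μ]
    (δ : ℝ) (hδ0 : 0 < δ) (hδ1 : δ < 1)
    (hσ : msupport σ ⊆ Set.Icc (-1 : ℝ) 1)
    (hinv : ∀ f : BoundedContinuousFunction ℝ ℝ,
      ∫ x, f x ∂μ = ∫ β, ∫ s, f (δ * s + (1 - δ) * β) ∂μ ∂σ) :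
    msupport μ ⊆ Set.Icc (-1 : ℝ) 1 := by
  intro x hx
  by_contra hmem
  have hx1 : 1 < |x| := by
    rw [mem_Icc] at hmem
    push_neg at hmem
    rcases le_or_gt (-1 : ℝ) x with h | h
    · exact lt_of_lt_of_le (hmem h) (le_abs_self x)
    · calc (1:ℝ) < -x := by linarith
        _ ≤ |x| := neg_le_abs x
  set b : ℝ := (1 + |x|) / 2 with hbdef
  have hb1 : 1 < b := by rw [hbdef]; linarith
  have hbx : b < |x| := by rw [hbdef]; linarith
  have hball : ball x (|x| - b) ⊆ {t : ℝ | b ≤ |t|} := by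
    intro t ht
    rw [mem_ball] at ht
    simp only [mem_setOf_eq]
    have h1 : |x| - |t| ≤ |t - x| := by
      rw [abs_sub_comm]; exact abs_sub_abs_le_abs_sub x t
    rw [Real.dist_eq] at ht
    linarith
  have hpos := hx (|x| - b) (by linarith)
  have hz := tail_zero σ μ δ hδ0 hδ1 hσ hinv hb1
  have := measure_mono_null hball hz
  rw [this] at hpos
  exact lt_irrefl _ hpos

theorem supp_mu_subset_neighborhood (σ μ : Measure ℝ)
    [IsProbabilityMeasure σ] [IsProbabilityMeasure μ]
    (δ : ℝ) (hδ0 : 0 < δ) (hδ1 : δ < 1)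
    (hσ : msupport σ ⊆ Set.Icc (-1 : ℝ) 1)
    (hinv : ∀ f : BoundedContinuousFunction ℝ ℝ,
      ∫ x, f x ∂μ = ∫ β, ∫ s, f (δ * s + (1 - δ) * β) ∂μ ∂σ) :
    ∀ x ∈ msupport μ, ∃ y ∈ msupport σ, dist x y ≤ 2 * δ := by
  intro x hx
  by_contra hcon
  push_neg at hcon
  -- compactness: uniform separation
  have hK : IsCompact (msupport σ) :=
    isCompact_Icc.of_isClosed_subset (msupport_closed σ) hσ
  obtain ⟨y₀, hy₀, hinf⟩ := hK.exists_infDist_eq_dist (msupport_nonempty σ) x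
  set η : ℝ := dist x y₀ - 2 * δ with hη
  have hηpos : 0 < η := by
    have := hcon y₀ hy₀
    rw [hη]; linarith
  -- bump function
  have hcont : Continuous (fun t : ℝ => max 0 (min 1 (1 - |t - x|/η))) := by
    apply Continuous.max continuous_const
    apply Continuous.min continuous_const
    exact continuous_const.sub ((continuous_id.sub continuous_const).abs.div_const _)
  have hbd : ∀ t : ℝ, ‖max 0 (min 1 (1 - |t - x|/η))‖ ≤ 1 := by
    intro t
    rw [Real.norm_eq_abs, abs_le]
    refine ⟨by linarith [le_max_left (0:ℝ) (min 1 (1 - |t - x|/η))], ?_⟩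
    apply max_le zero_le_one (min_le_left _ _)
  set g : BoundedContinuousFunction ℝ ℝ :=
    BoundedContinuousFunction.ofNormedAddCommGroup _ hcont 1 hbd with hg
  have hgval : ∀ t, g t = max 0 (min 1 (1 - |t - x|/η)) := fun t => rfl
  have hg0 : ∀ t, 0 ≤ g t := fun t => le_max_left _ _
  have hghalf : ∀ t, |t - x| < η/2 → (1:ℝ)/2 ≤ g t := by
    intro t ht
    rw [hgval]
    have h1 : (1:ℝ)/2 ≤ 1 - |t - x|/η := by
      have : |t - x|/η < 1/2 := by
        rw [div_lt_iff₀ hηpos]; linarith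
      linarith
    exact le_max_of_le_right (le_min (by norm_num) h1)
  have hgzero : ∀ t, η ≤ |t - x| → g t = 0 := by
    intro t ht
    rw [hgval]
    have h1 : 1 - |t - x|/η ≤ 0 := by
      have : (1:ℝ) ≤ |t - x|/η := (le_div_iff₀ hηpos).mpr (by linarith)
      linarith
    rw [max_eq_left (le_trans (min_le_right _ _) h1)]
  -- LHS positive
  have hball : 0 < μ (ball x (η/2)) := hx (η/2) (by linarith)
  have hLpos : 0 < ∫ t, g t ∂μ := by
    have hind : ∫ t, (ball x (η/2)).indicator (fun _ => (1:ℝ)/2) t ∂μ ≤ ∫ t, g t ∂μ := by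
      apply integral_mono ((integrable_const ((1:ℝ)/2)).indicator measurableSet_ball)
        (g.integrable μ)
      intro t
      by_cases ht : t ∈ ball x (η/2)
      · rw [indicator_of_mem ht]
        apply hghalf
        rw [mem_ball, Real.dist_eq] at ht
        exact ht
      · rw [indicator_of_notMem ht]; exact hg0 t
    have heq := integral_indicator_const ((1:ℝ)/2) (measurableSet_ball (x := x) (ε := η/2)) (μ := μ)
    rw [heq] at hind
    refine lt_of_lt_of_le ?_ hind
    rw [smul_eq_mul]
    apply mul_pos _ (by norm_num)
    exact ENNReal.toReal_pos hball.ne' (measure_ne_top _ _)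
  -- RHS zero
  have hsuppμ := supp_subset_Icc σ μ δ hδ0 hδ1 hσ hinv
  have hRzero : ∫ β, ∫ s, g (δ * s + (1 - δ) * β) ∂μ ∂σ = 0 := by
    have houter : ∀ᵐ β ∂σ, ∫ s, g (δ * s + (1 - δ) * β) ∂μ = 0 := by
      filter_upwards [ae_mem_msupport σ] with β hβ
      apply integral_eq_zero_of_ae
      filter_upwards [ae_mem_msupport μ] with s hs
      have hs1 : |s| ≤ 1 := abs_le.mpr ⟨(hsuppμ hs).1, (hsuppμ hs).2⟩
      have hβ1 : |β| ≤ 1 := abs_le.mpr ⟨(hσ hβ).1, (hσ hβ).2⟩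
      have hdxβ : 2 * δ + η ≤ |x - β| := by
        have h1 : infDist x (msupport σ) ≤ dist x β := infDist_le_dist_of_mem hβ
        rw [hinf] at h1
        simp only [Real.dist_eq] at h1 hη ⊢
        linarith
      have hpβ : |δ * s + (1 - δ) * β - β| ≤ 2 * δ := by
        have : δ * s + (1 - δ) * β - β = δ * (s - β) := by ring
        rw [this, abs_mul, abs_of_pos hδ0]
        have : |s - β| ≤ 2 := by
          calc |s - β| ≤ |s| + |β| := abs_sub _ _
            _ ≤ 2 := by linarith
        nlinarith
      have hfar : η ≤ |δ * s + (1 - δ) * β - x| := by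
        have h1 : |x - β| ≤ |x - (δ * s + (1 - δ) * β)| + |δ * s + (1 - δ) * β - β| := by
          calc |x - β| = |(x - (δ * s + (1 - δ) * β)) + (δ * s + (1 - δ) * β - β)| := by ring_nf
            _ ≤ _ := abs_add_le _ _
        rw [abs_sub_comm x (δ * s + (1 - δ) * β)] at h1
        linarith
      show g (δ * s + (1 - δ) * β) = 0
      exact hgzero _ hfar
    have := norm_integral_le_of_norm_le_const (μ := σ)
      (f := fun β => ∫ s, g (δ * s + (1 - δ) * β) ∂μ) (C := 0) ?_
    · rw [zero_mul] at this
      exact norm_le_zero_iff.mp this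
    · filter_upwards [houter] with β hβ
      rw [hβ]; simp
  rw [hinv g, hRzero] at hLpos
  exact lt_irrefl _ hLpos
end
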